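/- Assume the Setup. For each i ∈ V let P_i ∈ ℝ^{n_i×n_i} be symmetric positive definite, Θ_i ∈ ℝ^{n_{N_i}×n_{N_i}} symmetric, Â_i ∈ ℝ^{n_i×n_{N_i}}, C̃_i ∈ ℝ^{p_i×n_{N_i}}, and let A_cl ∈ ℝ^{n×n} satisfy T_i A_cl = Â_i W_i for all i ∈ V. Suppose that for every i ∈ V the neighborhood Lyapunov inequality Â_iᵀ P_i Â_i − W_i T_iᵀ P_i T_i W_iᵀ + C̃_iᵀ C̃_i ≺ Θ_i holds, and that the relaxation condition Σ_{i∈V} W_iᵀ Θ_i W_i ⪯ 0 holds. Then, with P := Σ_{i∈V} T_iᵀ P_i T_i, the matrix P is symmetric positive definite and the global Lyapunov inequality A_clᵀ P A_cl − P + Σ_{i∈V} W_iᵀ C̃_iᵀ C̃_i W_i ≺ 0 holds. -/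

import Mathlib

open Matrix

private lemma sum_mulVec' {ι : Type} [Fintype ι] {m n : Type} [Fintype m] [Fintype n]
    (M : ι → Matrix m n ℝ) (x : n → ℝ) :
    (∑ i : ι, M i) *ᵥ x = ∑ i : ι, (M i) *ᵥ x := by
  ext j
  simp only [mulVec, dotProduct, Matrix.sum_apply, Finset.sum_apply, Finset.sum_mul]
  rw [Finset.sum_comm]

private lemma dotProduct_sum' {ι : Type} [Fintype ι] {n : Type} [Fintype n]
    (x : n → ℝ) (v : ι → n → ℝ) :
    x ⬝ᵥ (∑ i : ι, v i) = ∑ i : ι, x ⬝ᵥ v i := by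
  simp only [dotProduct, Finset.sum_apply, Finset.mul_sum]
  rw [Finset.sum_comm]

/-- If each `D i` is positive definite and the maps `B i` jointly have trivial kernel,
then `∑ i, (B i)ᵀ * D i * B i` is positive definite. -/
private lemma sumQuadPosDef {ι : Type} [Fintype ι] {n : ℕ} {m : ι → ℕ}
    (B : ∀ i : ι, Matrix (Fin (m i)) (Fin n) ℝ)
    (D : ∀ i : ι, Matrix (Fin (m i)) (Fin (m i)) ℝ)
    (hD : ∀ i, (D i).PosDef)
    (hB : ∀ x : Fin n → ℝ, x ≠ 0 → ∃ i, (B i) *ᵥ x ≠ 0) :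
    (∑ i : ι, (B i)ᵀ * D i * B i).PosDef := by
  rw [posDef_iff_dotProduct_mulVec]
  constructor
  · -- Hermitian
    have h : ∀ i : ι, ((B i)ᵀ * D i * B i).IsHermitian := by
      intro i
      have := isHermitian_conjTranspose_mul_mul (B i) (hD i).1
      simpa [conjTranspose_eq_transpose_of_trivial] using this
    unfold Matrix.IsHermitian
    rw [conjTranspose_sum]
    exact Finset.sum_congr rfl fun i _ => h i
  · intro x hx
    have hterm : ∀ i : ι, star x ⬝ᵥ ((B i)ᵀ * D i * B i) *ᵥ x
        = star (B i *ᵥ x) ⬝ᵥ (D i) *ᵥ (B i *ᵥ x) := by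
      intro i
      have hstar : (star x : Fin n → ℝ) = x := by simp
      have hstar2 : (star (B i *ᵥ x) : Fin (m i) → ℝ) = B i *ᵥ x := by simp
      rw [hstar, hstar2, ← mulVec_mulVec, ← mulVec_mulVec, dotProduct_mulVec,
        vecMul_transpose]
    rw [sum_mulVec', dotProduct_sum']
    obtain ⟨i₀, hi₀⟩ := hB x hx
    refine Finset.sum_pos' (fun i _ => ?_) ⟨i₀, Finset.mem_univ i₀, ?_⟩
    · rw [hterm i]
      exact (hD i).posSemidef.dotProduct_mulVec_nonneg _
    · rw [hterm i₀]
      exact (hD i₀).dotProduct_mulVec_pos hi₀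

/-- Lemma 1 (global Lyapunov LMI): the decomposed neighborhood H₂-design conditions
imply the global Lyapunov inequality with block-diagonal Lyapunov matrix. -/
theorem stmt0
    {ι : Type} [Fintype ι] [DecidableEq ι]
    (n : ℕ) (ni nN : ι → ℕ) (N : ι → Finset ι)
    (T : ∀ i : ι, Matrix (Fin (ni i)) (Fin n) ℝ)
    (W : ∀ i : ι, Matrix (Fin (nN i)) (Fin n) ℝ)
    (hNself : ∀ i : ι, i ∈ N i)
    (hn : n = ∑ i : ι, ni i)
    (hnN : ∀ i : ι, nN i = ∑ j ∈ N i, ni j)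
    (hTT : ∀ i : ι, T i * (T i)ᵀ = 1)
    (hTTzero : ∀ i j : ι, i ≠ j → T i * (T j)ᵀ = 0)
    (hTsum : ∑ i : ι, (T i)ᵀ * T i = 1)
    (hWW : ∀ i : ι, W i * (W i)ᵀ = 1)
    (hWTW : ∀ i : ι, (W i)ᵀ * W i = ∑ j ∈ N i, (T j)ᵀ * T j)
    (p : ι → ℕ)
    (P : ∀ i : ι, Matrix (Fin (ni i)) (Fin (ni i)) ℝ)
    (hP : ∀ i : ι, (P i).PosDef)
    (Θ : ∀ i : ι, Matrix (Fin (nN i)) (Fin (nN i)) ℝ)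
    (hΘ : ∀ i : ι, (Θ i).IsSymm)
    (Ahat : ∀ i : ι, Matrix (Fin (ni i)) (Fin (nN i)) ℝ)
    (Ctil : ∀ i : ι, Matrix (Fin (p i)) (Fin (nN i)) ℝ)
    (Acl : Matrix (Fin n) (Fin n) ℝ)
    (hAcl : ∀ i : ι, T i * Acl = Ahat i * W i)
    (hLyap : ∀ i : ι,
      (Θ i - ((Ahat i)ᵀ * P i * Ahat i - W i * (T i)ᵀ * P i * (T i * (W i)ᵀ)
        + (Ctil i)ᵀ * Ctil i)).PosDef)
    (hRelax : (-(∑ i : ι, (W i)ᵀ * Θ i * W i)).PosSemidef)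
    :
    (∑ i : ι, (T i)ᵀ * P i * T i).PosDef ∧
    (-(Aclᵀ * (∑ i : ι, (T i)ᵀ * P i * T i) * Acl - (∑ i : ι, (T i)ᵀ * P i * T i)
        + ∑ i : ι, (W i)ᵀ * ((Ctil i)ᵀ * Ctil i) * W i)).PosDef := by
  -- Nontriviality of the T-blocks on nonzero vectors
  have hTx : ∀ x : Fin n → ℝ, x ≠ 0 → ∃ i, (T i) *ᵥ x ≠ 0 := by
    intro x hx
    by_contra h
    push_neg at h
    apply hx
    have : (1 : Matrix (Fin n) (Fin n) ℝ) *ᵥ x = 0 := by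
      rw [← hTsum, sum_mulVec']
      refine Finset.sum_eq_zero fun i _ => ?_
      rw [← mulVec_mulVec, h i, mulVec_zero]
    simpa using this
  -- T i * (Wᵢᵀ Wᵢ) = T i
  have hTWW : ∀ i : ι, T i * ((W i)ᵀ * W i) = T i := by
    intro i
    rw [hWTW, Matrix.mul_sum,
      Finset.sum_eq_single i
        (fun j _ hj => by rw [← Matrix.mul_assoc, hTTzero i j (Ne.symm hj), Matrix.zero_mul])
        (fun h => absurd (hNself i) h),
      ← Matrix.mul_assoc, hTT, Matrix.one_mul]
  -- Nontriviality of the W-blocks on nonzero vectors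
  have hWx : ∀ x : Fin n → ℝ, x ≠ 0 → ∃ i, (W i) *ᵥ x ≠ 0 := by
    intro x hx
    obtain ⟨i, hi⟩ := hTx x hx
    refine ⟨i, fun h => hi ?_⟩
    have : T i *ᵥ x = (T i * ((W i)ᵀ * W i)) *ᵥ x := by rw [hTWW]
    rw [this, ← mulVec_mulVec, ← mulVec_mulVec, h, mulVec_zero, mulVec_zero]
  constructor
  · exact sumQuadPosDef T P hP hTx
  · -- key per-node identity
    have key : ∀ i : ι,
        (W i)ᵀ * ((Ahat i)ᵀ * P i * Ahat i - W i * (T i)ᵀ * P i * (T i * (W i)ᵀ)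
          + (Ctil i)ᵀ * Ctil i) * W i
        = Aclᵀ * ((T i)ᵀ * P i * T i) * Acl - (T i)ᵀ * P i * T i
          + (W i)ᵀ * ((Ctil i)ᵀ * Ctil i) * W i := by
      intro i
      have h1 : (W i)ᵀ * (Ahat i)ᵀ = Aclᵀ * (T i)ᵀ := by
        rw [← transpose_mul, ← transpose_mul, hAcl i]
      have h3 : (W i)ᵀ * (W i * (T i)ᵀ) = (T i)ᵀ := by
        have := congrArg Matrix.transpose (hTWW i)
        rwa [transpose_mul, transpose_mul, transpose_transpose, Matrix.mul_assoc] at this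
      have h1Q : ∀ (Q : Matrix (Fin (ni i)) (Fin n) ℝ),
          (W i)ᵀ * ((Ahat i)ᵀ * Q) = Aclᵀ * ((T i)ᵀ * Q) := by
        intro Q; rw [← Matrix.mul_assoc, h1, Matrix.mul_assoc]
      have h3Q : ∀ (Q : Matrix (Fin (ni i)) (Fin n) ℝ),
          (W i)ᵀ * (W i * ((T i)ᵀ * Q)) = (T i)ᵀ * Q := by
        intro Q; rw [← Matrix.mul_assoc, ← Matrix.mul_assoc, Matrix.mul_assoc ((W i)ᵀ), h3]
      simp only [Matrix.mul_sub, Matrix.sub_mul, Matrix.mul_add, Matrix.add_mul,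
        Matrix.mul_assoc]
      rw [h1Q, h3Q, hTWW, ← hAcl]
    -- rewrite the goal matrix as a sum of a PosDef and a PosSemidef matrix
    have hEq : -(Aclᵀ * (∑ i : ι, (T i)ᵀ * P i * T i) * Acl - (∑ i : ι, (T i)ᵀ * P i * T i)
          + ∑ i : ι, (W i)ᵀ * ((Ctil i)ᵀ * Ctil i) * W i)
        = (∑ i : ι, (W i)ᵀ *
            (Θ i - ((Ahat i)ᵀ * P i * Ahat i - W i * (T i)ᵀ * P i * (T i * (W i)ᵀ)
              + (Ctil i)ᵀ * Ctil i)) * W i)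
          + -(∑ i : ι, (W i)ᵀ * Θ i * W i) := by
      have expand : ∀ i : ι, (W i)ᵀ *
            (Θ i - ((Ahat i)ᵀ * P i * Ahat i - W i * (T i)ᵀ * P i * (T i * (W i)ᵀ)
              + (Ctil i)ᵀ * Ctil i)) * W i
          = (W i)ᵀ * Θ i * W i
            - (Aclᵀ * ((T i)ᵀ * P i * T i) * Acl - (T i)ᵀ * P i * T i
              + (W i)ᵀ * ((Ctil i)ᵀ * Ctil i) * W i) := by
        intro i
        rw [← key i, Matrix.mul_sub, Matrix.sub_mul]
      rw [Finset.sum_congr rfl (fun i _ => expand i), Finset.sum_sub_distrib,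
        Finset.sum_add_distrib, Finset.sum_sub_distrib, ← Matrix.sum_mul,
        ← Matrix.mul_sum]
      abel
    rw [hEq]
    exact Matrix.PosDef.add_posSemidef
      (sumQuadPosDef W _ (fun i => hLyap i) hWx) hRelax
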